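/- Let M_i, M_{i+1}: ℝ → ℝ₊ be nonnegative functions and ΔZ ∈ ℝ. Define the downwind interface flux M⁻(ξ) = M_i(ξ)𝟙_{ξ≥0} + M_i(−ξ)𝟙_{ξ²≤2gΔZ}𝟙_{ξ≤0} + M_{i+1}(−√(ξ²−2gΔZ))𝟙_{ξ²≥2gΔZ}𝟙_{ξ≤0} and the upwind flux M⁺(ξ) = M_{i+1}(ξ)𝟙_{ξ≤0} + M_{i+1}(−ξ)𝟙_{ξ²≤−2gΔZ}𝟙_{ξ≥0} + M_i(√(ξ²+2gΔZ))𝟙_{ξ²≥−2gΔZ}𝟙_{ξ≥0}. Then ∫_ℝ ξ M⁻(ξ) dξ = ∫_ℝ ξ M⁺(ξ) dξ, i.e. the mass flux is conservative across the interface. -/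

import Mathlib

open MeasureTheory Real Set

lemma hderiv (a : ℝ) {x : ℝ} (hx : 0 < x ^ 2 + a ^ 2) :
    HasDerivAt (fun u : ℝ => Real.sqrt (u ^ 2 + a ^ 2))
      (x / Real.sqrt (x ^ 2 + a ^ 2)) x := by
  have h1 : HasDerivAt (fun u : ℝ => u ^ 2 + a ^ 2) (2 * x) x := by
    simpa using (hasDerivAt_pow 2 x).add_const (a ^ 2)
  have h2 := (Real.hasDerivAt_sqrt (ne_of_gt hx)).comp x h1
  refine h2.congr_deriv ?_
  have hs : Real.sqrt (x ^ 2 + a ^ 2) ≠ 0 := by positivity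
  field_simp

lemma img_Ioi (a : ℝ) (ha : 0 ≤ a) :
    (fun u : ℝ => Real.sqrt (u ^ 2 + a ^ 2)) '' Ioi 0 = Ioi a := by
  ext y
  constructor
  · rintro ⟨u, hu, rfl⟩
    have hu' : (0:ℝ) < u := hu
    have : a ^ 2 < u ^ 2 + a ^ 2 := by nlinarith
    have := Real.sqrt_lt_sqrt (by positivity) this
    rwa [Real.sqrt_sq ha] at this
  · intro hy
    have hay : a < y := hy
    have hy0 : 0 < y := lt_of_le_of_lt ha hay
    refine ⟨Real.sqrt (y ^ 2 - a ^ 2), ?_, ?_⟩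
    · have : 0 < y ^ 2 - a ^ 2 := by nlinarith
      exact Real.sqrt_pos.mpr this
    · show Real.sqrt (Real.sqrt (y ^ 2 - a ^ 2) ^ 2 + a ^ 2) = y
      rw [Real.sq_sqrt (by nlinarith : (0:ℝ) ≤ y ^ 2 - a ^ 2)]
      have : y ^ 2 - a ^ 2 + a ^ 2 = y ^ 2 := by ring
      rw [this, Real.sqrt_sq hy0.le]

lemma img_Iio (a : ℝ) (ha : 0 ≤ a) :
    (fun u : ℝ => -Real.sqrt (u ^ 2 + a ^ 2)) '' Iio 0 = Iio (-a) := by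
  ext y
  constructor
  · rintro ⟨u, hu, rfl⟩
    have hu' : u < 0 := hu
    have : a ^ 2 < u ^ 2 + a ^ 2 := by nlinarith
    have h2 := Real.sqrt_lt_sqrt (by positivity) this
    rw [Real.sqrt_sq ha] at h2
    simpa using h2
  · intro hy
    have hay : y < -a := hy
    have hy0 : y < 0 := lt_of_lt_of_le hay (by linarith)
    refine ⟨-Real.sqrt (y ^ 2 - a ^ 2), ?_, ?_⟩
    · have : 0 < y ^ 2 - a ^ 2 := by nlinarith
      simpa using Real.sqrt_pos.mpr this
    · have hnn : (0:ℝ) ≤ y ^ 2 - a ^ 2 := by nlinarith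
      show -Real.sqrt ((-Real.sqrt (y ^ 2 - a ^ 2)) ^ 2 + a ^ 2) = y
      rw [show (-Real.sqrt (y ^ 2 - a ^ 2)) ^ 2 = y ^ 2 - a ^ 2 by
        rw [neg_pow, Real.sq_sqrt hnn]; ring]
      have : y ^ 2 - a ^ 2 + a ^ 2 = y ^ 2 := by ring
      rw [this, show Real.sqrt (y ^ 2) = -y by
        rw [Real.sqrt_sq_eq_abs, abs_of_neg hy0]]
      ring

lemma inj_Ioi (a : ℝ) : InjOn (fun u : ℝ => Real.sqrt (u ^ 2 + a ^ 2)) (Ioi 0) := by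
  intro x hx y hy h
  simp only at h
  have hx' : (0:ℝ) < x := hx
  have hy' : (0:ℝ) < y := hy
  have h2 : x ^ 2 + a ^ 2 = y ^ 2 + a ^ 2 :=
    (Real.sqrt_inj (by positivity) (by positivity)).mp h
  have : |x| = |y| := by
    rw [← Real.sqrt_sq_eq_abs, ← Real.sqrt_sq_eq_abs]
    congr 1; nlinarith
  rwa [abs_of_pos hx', abs_of_pos hy'] at this

lemma inj_Iio (a : ℝ) : InjOn (fun u : ℝ => -Real.sqrt (u ^ 2 + a ^ 2)) (Iio 0) := by
  intro x hx y hy h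
  simp only [neg_inj] at h
  have hx' : x < 0 := hx
  have hy' : y < 0 := hy
  have h2 : x ^ 2 + a ^ 2 = y ^ 2 + a ^ 2 :=
    (Real.sqrt_inj (by positivity) (by positivity)).mp h
  have : |x| = |y| := by
    rw [← Real.sqrt_sq_eq_abs, ← Real.sqrt_sq_eq_abs]
    congr 1; nlinarith
  rw [abs_of_neg hx', abs_of_neg hy'] at this
  linarith

lemma deriv_Ioi (a : ℝ) : ∀ x ∈ Ioi (0:ℝ),
    HasDerivWithinAt (fun u : ℝ => Real.sqrt (u ^ 2 + a ^ 2))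
      (x / Real.sqrt (x ^ 2 + a ^ 2)) (Ioi 0) x := by
  intro x hx
  have hx' : (0:ℝ) < x := hx
  exact (hderiv a (by positivity)).hasDerivWithinAt

lemma deriv_Iio (a : ℝ) : ∀ x ∈ Iio (0:ℝ),
    HasDerivWithinAt (fun u : ℝ => -Real.sqrt (u ^ 2 + a ^ 2))
      (-(x / Real.sqrt (x ^ 2 + a ^ 2))) (Iio 0) x := by
  intro x hx
  have hx' : x < 0 := hx
  have hx2 : (0:ℝ) < x ^ 2 + a ^ 2 := by nlinarith [sq_nonneg a]
  exact ((hderiv a hx2).neg).hasDerivWithinAt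

lemma ptw_Ioi (a : ℝ) (f : ℝ → ℝ) : ∀ x ∈ Ioi (0:ℝ),
    |x / Real.sqrt (x ^ 2 + a ^ 2)| •
      ((fun v : ℝ => v * f v) (Real.sqrt (x ^ 2 + a ^ 2)))
      = x * f (Real.sqrt (x ^ 2 + a ^ 2)) := by
  intro x hx
  have hx' : (0:ℝ) < x := hx
  have hS : (0:ℝ) < Real.sqrt (x ^ 2 + a ^ 2) := Real.sqrt_pos.mpr (by positivity)
  rw [abs_of_pos (by positivity)]
  simp only [smul_eq_mul]
  field_simp

lemma ptw_Iio (a : ℝ) (f : ℝ → ℝ) : ∀ x ∈ Iio (0:ℝ),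
    |(-(x / Real.sqrt (x ^ 2 + a ^ 2)))| •
      ((fun ξ : ℝ => ξ * f (-Real.sqrt (ξ ^ 2 - a ^ 2)))
        ((fun u : ℝ => -Real.sqrt (u ^ 2 + a ^ 2)) x))
      = x * f x := by
  intro x hx
  have hx' : x < 0 := hx
  have hS : (0:ℝ) < Real.sqrt (x ^ 2 + a ^ 2) :=
    Real.sqrt_pos.mpr (by nlinarith [sq_nonneg a])
  have key : -Real.sqrt ((-Real.sqrt (x ^ 2 + a ^ 2)) ^ 2 - a ^ 2) = x := by
    rw [show (-Real.sqrt (x ^ 2 + a ^ 2)) ^ 2 = x ^ 2 + a ^ 2 by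
      rw [neg_pow, Real.sq_sqrt (by positivity)]; ring]
    rw [show x ^ 2 + a ^ 2 - a ^ 2 = x ^ 2 by ring, Real.sqrt_sq_eq_abs,
      abs_of_neg hx']
    ring
  simp only [smul_eq_mul, key]
  rw [abs_neg, abs_div, abs_of_neg hx', abs_of_pos hS]
  field_simp

lemma subst_Ioi (a : ℝ) (ha : 0 ≤ a) (f : ℝ → ℝ) :
    (∫ v in Ioi a, v * f v) = ∫ u in Ioi 0, u * f (Real.sqrt (u ^ 2 + a ^ 2)) := by
  rw [← img_Ioi a ha,
    integral_image_eq_integral_abs_deriv_smul measurableSet_Ioi (deriv_Ioi a)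
      (inj_Ioi a) (fun v => v * f v)]
  exact setIntegral_congr_fun measurableSet_Ioi (ptw_Ioi a f)

lemma subst_Ioi_int (a : ℝ) (ha : 0 ≤ a) (f : ℝ → ℝ)
    (hf : IntegrableOn (fun v => v * f v) (Ioi a)) :
    IntegrableOn (fun u => u * f (Real.sqrt (u ^ 2 + a ^ 2))) (Ioi 0) := by
  rw [← img_Ioi a ha] at hf
  have := (integrableOn_image_iff_integrableOn_abs_deriv_smul measurableSet_Ioi
    (deriv_Ioi a) (inj_Ioi a) (fun v => v * f v)).mp hf
  exact this.congr_fun (ptw_Ioi a f) measurableSet_Ioi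

lemma subst_Iio (a : ℝ) (ha : 0 ≤ a) (f : ℝ → ℝ) :
    (∫ ξ in Iio (-a), ξ * f (-Real.sqrt (ξ ^ 2 - a ^ 2))) = ∫ u in Iio 0, u * f u := by
  rw [← img_Iio a ha,
    integral_image_eq_integral_abs_deriv_smul measurableSet_Iio (deriv_Iio a)
      (inj_Iio a) (fun ξ => ξ * f (-Real.sqrt (ξ ^ 2 - a ^ 2)))]
  exact setIntegral_congr_fun measurableSet_Iio (ptw_Iio a f)

lemma subst_Iio_int (a : ℝ) (ha : 0 ≤ a) (f : ℝ → ℝ)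
    (hf : IntegrableOn (fun u => u * f u) (Iio 0)) :
    IntegrableOn (fun ξ => ξ * f (-Real.sqrt (ξ ^ 2 - a ^ 2))) (Iio (-a)) := by
  rw [← img_Iio a ha]
  rw [integrableOn_image_iff_integrableOn_abs_deriv_smul measurableSet_Iio
    (deriv_Iio a) (inj_Iio a) (fun ξ => ξ * f (-Real.sqrt (ξ ^ 2 - a ^ 2)))]
  exact hf.congr_fun (fun x hx => (ptw_Iio a f x hx).symm) measurableSet_Iio

lemma ind_right (a : ℝ) (h : ℝ → ℝ) :
    (fun ξ : ℝ => ξ * h ξ * (if 0 ≤ ξ then (1:ℝ) else 0))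
      = Set.indicator (Ici 0) (fun ξ => ξ * h ξ) := by
  funext ξ
  by_cases h0 : (0:ℝ) ≤ ξ <;>
    simp [Set.indicator_apply, mem_Ici, h0]

lemma ind_left (a : ℝ) (h : ℝ → ℝ) :
    (fun ξ : ℝ => ξ * h ξ * (if ξ ≤ 0 then (1:ℝ) else 0))
      = Set.indicator (Iic 0) (fun ξ => ξ * h ξ) := by
  funext ξ
  by_cases h0 : ξ ≤ (0:ℝ) <;>
    simp [Set.indicator_apply, mem_Iic, h0]

lemma ind_refl (a : ℝ) (ha : 0 ≤ a) (h : ℝ → ℝ) :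
    (fun ξ : ℝ => ξ * h ξ * (if ξ ^ 2 ≤ a ^ 2 then (1:ℝ) else 0)
        * (if ξ ≤ 0 then (1:ℝ) else 0))
      = Set.indicator (Icc (-a) 0) (fun ξ => ξ * h ξ) := by
  funext ξ
  by_cases hB : ξ ≤ (0:ℝ)
  · by_cases hA : ξ ^ 2 ≤ a ^ 2
    · have hm : ξ ∈ Icc (-a) 0 := ⟨by nlinarith, hB⟩
      simp [hA, hB, Set.indicator_of_mem hm]
    · have hm : ξ ∉ Icc (-a) 0 := by
        intro hm; exact hA (by nlinarith [hm.1, hm.2])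
      simp [hA, Set.indicator_of_notMem hm]
  · have hm : ξ ∉ Icc (-a) 0 := fun hm => hB hm.2
    simp [hB, Set.indicator_of_notMem hm]

lemma ind_trans (a : ℝ) (ha : 0 ≤ a) (h : ℝ → ℝ) :
    (fun ξ : ℝ => ξ * h ξ * (if a ^ 2 ≤ ξ ^ 2 then (1:ℝ) else 0)
        * (if ξ ≤ 0 then (1:ℝ) else 0))
      = Set.indicator (Iic (-a)) (fun ξ => ξ * h ξ) := by
  funext ξ
  by_cases hB : ξ ≤ (0:ℝ)
  · by_cases hA : a ^ 2 ≤ ξ ^ 2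
    · have hm : ξ ∈ Iic (-a) := by
        simp only [mem_Iic]; nlinarith
      simp [hA, hB, Set.indicator_of_mem hm]
    · have hm : ξ ∉ Iic (-a) := by
        simp only [mem_Iic]; intro hm; exact hA (by nlinarith)
      simp [hA, Set.indicator_of_notMem hm]
  · have hm : ξ ∉ Iic (-a) := by
      simp only [mem_Iic]; intro hm; exact hB (by linarith)
    simp [hB, Set.indicator_of_notMem hm]

lemma main_nonneg (c : ℝ) (hc : 0 ≤ c) (Mi Mi1 : ℝ → ℝ)
    (h3 : Integrable fun ξ => ξ * Mi ξ) (h4 : Integrable fun ξ => ξ * Mi1 ξ) :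
    (∫ ξ : ℝ, ξ *
        (Mi ξ * (if 0 ≤ ξ then (1 : ℝ) else 0)
          + Mi (-ξ) * (if ξ ^ 2 ≤ c then (1 : ℝ) else 0)
              * (if ξ ≤ 0 then (1 : ℝ) else 0)
          + Mi1 (-Real.sqrt (ξ ^ 2 - c))
              * (if c ≤ ξ ^ 2 then (1 : ℝ) else 0)
              * (if ξ ≤ 0 then (1 : ℝ) else 0)))
    = ∫ ξ : ℝ, ξ *
        (Mi1 ξ * (if ξ ≤ 0 then (1 : ℝ) else 0)
          + Mi1 (-ξ) * (if ξ ^ 2 ≤ -c then (1 : ℝ) else 0)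
              * (if 0 ≤ ξ then (1 : ℝ) else 0)
          + Mi (Real.sqrt (ξ ^ 2 + c))
              * (if -c ≤ ξ ^ 2 then (1 : ℝ) else 0)
              * (if 0 ≤ ξ then (1 : ℝ) else 0)) := by
  obtain ⟨a, ha, rfl⟩ : ∃ a : ℝ, 0 ≤ a ∧ a ^ 2 = c :=
    ⟨Real.sqrt c, Real.sqrt_nonneg c, Real.sq_sqrt hc⟩
  -- integrability of the neg-composed moment
  have h3n : Integrable fun ξ : ℝ => ξ * Mi (-ξ) :=
    h3.comp_neg.neg.congr (Filter.Eventually.of_forall fun t => by show -(-t * Mi (-t)) = t * Mi (-t); ring)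
  -- the three pieces of the left-hand side
  have hL : (fun ξ : ℝ => ξ *
        (Mi ξ * (if 0 ≤ ξ then (1 : ℝ) else 0)
          + Mi (-ξ) * (if ξ ^ 2 ≤ a ^ 2 then (1 : ℝ) else 0)
              * (if ξ ≤ 0 then (1 : ℝ) else 0)
          + Mi1 (-Real.sqrt (ξ ^ 2 - a ^ 2))
              * (if a ^ 2 ≤ ξ ^ 2 then (1 : ℝ) else 0)
              * (if ξ ≤ 0 then (1 : ℝ) else 0)))
      = (fun ξ : ℝ =>
          Set.indicator (Ici 0) (fun ξ => ξ * Mi ξ) ξ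
          + Set.indicator (Icc (-a) 0) (fun ξ => ξ * Mi (-ξ)) ξ
          + Set.indicator (Iic (-a))
              (fun ξ => ξ * Mi1 (-Real.sqrt (ξ ^ 2 - a ^ 2))) ξ) := by
    rw [← ind_right a Mi, ← ind_refl a ha (fun ξ => Mi (-ξ)),
      ← ind_trans a ha (fun ξ => Mi1 (-Real.sqrt (ξ ^ 2 - a ^ 2)))]
    funext ξ; ring
  have hG2 : (fun ξ : ℝ => ξ * Mi1 (-ξ) * (if ξ ^ 2 ≤ -a ^ 2 then (1:ℝ) else 0)
      * (if 0 ≤ ξ then (1:ℝ) else 0)) = fun _ => (0:ℝ) := by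
    funext ξ
    by_cases hA : ξ ^ 2 ≤ -a ^ 2
    · have : ξ = 0 := by nlinarith
      simp [this]
    · simp [hA]
  have hR : (fun ξ : ℝ => ξ *
        (Mi1 ξ * (if ξ ≤ 0 then (1 : ℝ) else 0)
          + Mi1 (-ξ) * (if ξ ^ 2 ≤ -a ^ 2 then (1 : ℝ) else 0)
              * (if 0 ≤ ξ then (1 : ℝ) else 0)
          + Mi (Real.sqrt (ξ ^ 2 + a ^ 2))
              * (if -a ^ 2 ≤ ξ ^ 2 then (1 : ℝ) else 0)
              * (if 0 ≤ ξ then (1 : ℝ) else 0)))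
      = (fun ξ : ℝ =>
          Set.indicator (Iic 0) (fun ξ => ξ * Mi1 ξ) ξ
          + Set.indicator (Ici 0)
              (fun ξ => ξ * Mi (Real.sqrt (ξ ^ 2 + a ^ 2))) ξ) := by
    rw [← ind_left a Mi1, ← ind_right a (fun ξ => Mi (Real.sqrt (ξ ^ 2 + a ^ 2)))]
    funext ξ
    have hg2 := congrFun hG2 ξ
    have htriv : (if -a ^ 2 ≤ ξ ^ 2 then (1:ℝ) else 0) = 1 := by
      rw [if_pos]; nlinarith
    rw [htriv]
    linear_combination hg2
  -- integrability of the pieces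
  have i1 : Integrable (Set.indicator (Ici 0) (fun ξ : ℝ => ξ * Mi ξ)) :=
    h3.indicator measurableSet_Ici
  have i2 : Integrable (Set.indicator (Icc (-a) 0) (fun ξ : ℝ => ξ * Mi (-ξ))) :=
    h3n.indicator measurableSet_Icc
  have i3 : Integrable (Set.indicator (Iic (-a))
      (fun ξ : ℝ => ξ * Mi1 (-Real.sqrt (ξ ^ 2 - a ^ 2)))) := by
    refine IntegrableOn.integrable_indicator ?_ measurableSet_Iic
    exact (integrableOn_Iic_iff_integrableOn_Iio).mpr
      (subst_Iio_int a ha Mi1 (h4.integrableOn))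
  have i4 : Integrable (Set.indicator (Iic 0) (fun ξ : ℝ => ξ * Mi1 ξ)) :=
    h4.indicator measurableSet_Iic
  have i5 : Integrable (Set.indicator (Ici 0)
      (fun ξ : ℝ => ξ * Mi (Real.sqrt (ξ ^ 2 + a ^ 2)))) := by
    refine IntegrableOn.integrable_indicator ?_ measurableSet_Ici
    exact (integrableOn_Ici_iff_integrableOn_Ioi).mpr
      (subst_Ioi_int a ha Mi (h3.integrableOn))
  rw [hL, hR]
  have i12 : Integrable (fun ξ : ℝ =>
      Set.indicator (Ici 0) (fun ξ : ℝ => ξ * Mi ξ) ξ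
        + Set.indicator (Icc (-a) 0) (fun ξ : ℝ => ξ * Mi (-ξ)) ξ) := i1.add i2
  rw [integral_add i12 i3, integral_add i1 i2, integral_add i4 i5]
  rw [integral_indicator measurableSet_Ici, integral_indicator measurableSet_Icc,
    integral_indicator measurableSet_Iic, integral_indicator measurableSet_Iic,
    integral_indicator measurableSet_Ici]
  -- compute each piece
  have e1 : (∫ ξ in Ici (0:ℝ), ξ * Mi ξ)
      = (∫ ξ in Ioc 0 a, ξ * Mi ξ) + ∫ ξ in Ioi a, ξ * Mi ξ := by
    rw [integral_Ici_eq_integral_Ioi, ← Ioc_union_Ioi_eq_Ioi ha,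
      setIntegral_union Ioc_disjoint_Ioi_same measurableSet_Ioi
        h3.integrableOn h3.integrableOn]
  have e2 : (∫ ξ in Icc (-a) 0, ξ * Mi (-ξ)) = -∫ ξ in Ioc 0 a, ξ * Mi ξ := by
    have hneg : (fun x : ℝ => Set.indicator (Icc (-a) 0)
          (fun ξ : ℝ => ξ * Mi (-ξ)) (-x))
        = Set.indicator (Icc 0 a) (fun u : ℝ => -(u * Mi u)) := by
      funext x
      by_cases hm : x ∈ Icc (0:ℝ) a
      · have hm' : -x ∈ Icc (-a) (0:ℝ) := ⟨by linarith [hm.2], by linarith [hm.1]⟩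
        rw [Set.indicator_of_mem hm', Set.indicator_of_mem hm]
        simp
      · have hm' : -x ∉ Icc (-a) (0:ℝ) := by
          intro h
          exact hm ⟨by linarith [h.2], by linarith [h.1]⟩
        rw [Set.indicator_of_notMem hm', Set.indicator_of_notMem hm]
    rw [← integral_indicator measurableSet_Icc,
      ← integral_neg_eq_self (Set.indicator (Icc (-a) 0) (fun ξ : ℝ => ξ * Mi (-ξ))) volume]
    rw [hneg, integral_indicator measurableSet_Icc, integral_Icc_eq_integral_Ioc]
    rw [integral_neg]
  have e3 : (∫ ξ in Iic (-a), ξ * Mi1 (-Real.sqrt (ξ ^ 2 - a ^ 2)))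
      = ∫ u in Iio (0:ℝ), u * Mi1 u := by
    rw [integral_Iic_eq_integral_Iio, subst_Iio a ha Mi1]
  have e4 : (∫ ξ in Iic (0:ℝ), ξ * Mi1 ξ) = ∫ u in Iio (0:ℝ), u * Mi1 u :=
    integral_Iic_eq_integral_Iio
  have e5 : (∫ ξ in Ici (0:ℝ), ξ * Mi (Real.sqrt (ξ ^ 2 + a ^ 2)))
      = ∫ v in Ioi a, v * Mi v := by
    rw [integral_Ici_eq_integral_Ioi, ← subst_Ioi a ha Mi]
  rw [e1, e2, e3, e4, e5]
  ring

/-- Downwind interface flux integrand. -/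
noncomputable def Fm (c : ℝ) (Mi Mi1 : ℝ → ℝ) (ξ : ℝ) : ℝ :=
  ξ * (Mi ξ * (if 0 ≤ ξ then (1 : ℝ) else 0)
    + Mi (-ξ) * (if ξ ^ 2 ≤ c then (1 : ℝ) else 0) * (if ξ ≤ 0 then (1 : ℝ) else 0)
    + Mi1 (-Real.sqrt (ξ ^ 2 - c)) * (if c ≤ ξ ^ 2 then (1 : ℝ) else 0)
        * (if ξ ≤ 0 then (1 : ℝ) else 0))

/-- Upwind interface flux integrand. -/
noncomputable def Fp (c : ℝ) (Mi Mi1 : ℝ → ℝ) (ξ : ℝ) : ℝ :=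
  ξ * (Mi1 ξ * (if ξ ≤ 0 then (1 : ℝ) else 0)
    + Mi1 (-ξ) * (if ξ ^ 2 ≤ -c then (1 : ℝ) else 0) * (if 0 ≤ ξ then (1 : ℝ) else 0)
    + Mi (Real.sqrt (ξ ^ 2 + c)) * (if -c ≤ ξ ^ 2 then (1 : ℝ) else 0)
        * (if 0 ≤ ξ then (1 : ℝ) else 0))

lemma main' (c : ℝ) (hc : 0 ≤ c) (Mi Mi1 : ℝ → ℝ)
    (h3 : Integrable fun ξ => ξ * Mi ξ) (h4 : Integrable fun ξ => ξ * Mi1 ξ) :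
    (∫ ξ : ℝ, Fm c Mi Mi1 ξ) = ∫ ξ : ℝ, Fp c Mi Mi1 ξ :=
  main_nonneg c hc Mi Mi1 h3 h4

lemma refl_m (c : ℝ) (Mi Mi1 : ℝ → ℝ) (x : ℝ) :
    Fm c Mi Mi1 (-x) = -(Fp (-c) (fun y => Mi1 (-y)) (fun y => Mi (-y)) x) := by
  unfold Fm Fp
  simp only [neg_neg, neg_sq, neg_nonneg, neg_nonpos, sub_neg_eq_add,
    ← sub_eq_add_neg]
  ring

lemma refl_p (c : ℝ) (Mi Mi1 : ℝ → ℝ) (x : ℝ) :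
    Fp c Mi Mi1 (-x) = -(Fm (-c) (fun y => Mi1 (-y)) (fun y => Mi (-y)) x) := by
  unfold Fm Fp
  simp only [neg_neg, neg_sq, neg_nonneg, neg_nonpos, sub_neg_eq_add,
    ← sub_eq_add_neg]
  ring

/-- Conservativity of the mass flux across an interface for the
reflection–transmission kinetic fluxes: `∫ ξ M⁻(ξ) dξ = ∫ ξ M⁺(ξ) dξ`. -/
theorem interface_mass_flux_conservative (g ΔZ : ℝ) (hg : 0 < g)
    (Mi Mi1 : ℝ → ℝ) (hMi : ∀ ξ, 0 ≤ Mi ξ) (hMi1 : ∀ ξ, 0 ≤ Mi1 ξ)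
    (h1 : Integrable Mi) (h2 : Integrable Mi1)
    (h3 : Integrable fun ξ => ξ * Mi ξ) (h4 : Integrable fun ξ => ξ * Mi1 ξ) :
    (∫ ξ : ℝ, ξ *
        (Mi ξ * (if 0 ≤ ξ then (1 : ℝ) else 0)
          + Mi (-ξ) * (if ξ ^ 2 ≤ 2 * g * ΔZ then (1 : ℝ) else 0)
              * (if ξ ≤ 0 then (1 : ℝ) else 0)
          + Mi1 (-Real.sqrt (ξ ^ 2 - 2 * g * ΔZ))
              * (if 2 * g * ΔZ ≤ ξ ^ 2 then (1 : ℝ) else 0)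
              * (if ξ ≤ 0 then (1 : ℝ) else 0)))
    = ∫ ξ : ℝ, ξ *
        (Mi1 ξ * (if ξ ≤ 0 then (1 : ℝ) else 0)
          + Mi1 (-ξ) * (if ξ ^ 2 ≤ -(2 * g * ΔZ) then (1 : ℝ) else 0)
              * (if 0 ≤ ξ then (1 : ℝ) else 0)
          + Mi (Real.sqrt (ξ ^ 2 + 2 * g * ΔZ))
              * (if -(2 * g * ΔZ) ≤ ξ ^ 2 then (1 : ℝ) else 0)
              * (if 0 ≤ ξ then (1 : ℝ) else 0)) := by
  show (∫ ξ : ℝ, Fm (2 * g * ΔZ) Mi Mi1 ξ) = ∫ ξ : ℝ, Fp (2 * g * ΔZ) Mi Mi1 ξ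
  rcases le_or_gt 0 (2 * g * ΔZ) with hc | hc
  · exact main' _ hc _ _ h3 h4
  · have hA : Integrable fun ξ : ℝ => ξ * Mi1 (-ξ) :=
      h4.comp_neg.neg.congr (Filter.Eventually.of_forall fun t => by
        show -(-t * Mi1 (-t)) = t * Mi1 (-t); ring)
    have hB : Integrable fun ξ : ℝ => ξ * Mi (-ξ) :=
      h3.comp_neg.neg.congr (Filter.Eventually.of_forall fun t => by
        show -(-t * Mi (-t)) = t * Mi (-t); ring)
    have hmain := main' (-(2 * g * ΔZ)) (by linarith)
      (fun y => Mi1 (-y)) (fun y => Mi (-y)) hA hB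
    calc (∫ ξ : ℝ, Fm (2 * g * ΔZ) Mi Mi1 ξ)
        = ∫ ξ : ℝ, Fm (2 * g * ΔZ) Mi Mi1 (-ξ) :=
          (integral_neg_eq_self (Fm (2 * g * ΔZ) Mi Mi1) volume).symm
      _ = ∫ ξ : ℝ, -(Fp (-(2 * g * ΔZ)) (fun y => Mi1 (-y)) (fun y => Mi (-y)) ξ) := by
          congr 1; funext x; exact refl_m _ _ _ x
      _ = -∫ ξ : ℝ, Fp (-(2 * g * ΔZ)) (fun y => Mi1 (-y)) (fun y => Mi (-y)) ξ :=
          integral_neg _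
      _ = -∫ ξ : ℝ, Fm (-(2 * g * ΔZ)) (fun y => Mi1 (-y)) (fun y => Mi (-y)) ξ := by
          rw [hmain]
      _ = ∫ ξ : ℝ, -(Fm (-(2 * g * ΔZ)) (fun y => Mi1 (-y)) (fun y => Mi (-y)) ξ) :=
          (integral_neg _).symm
      _ = ∫ ξ : ℝ, Fp (2 * g * ΔZ) Mi Mi1 (-ξ) := by
          congr 1; funext x; exact (refl_p _ _ _ x).symm
      _ = ∫ ξ : ℝ, Fp (2 * g * ΔZ) Mi Mi1 ξ :=
          integral_neg_eq_self (Fp (2 * g * ΔZ) Mi Mi1) volume
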